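/- Let φ ∈ (0, 1] and let G = (V, E, w) be a weighted graph with min-cut value λ > 0, U ⊆ V, and a partition of V into clusters V₁,...,V_ℓ with Uᵢ = Vᵢ ∩ U, satisfying: (a) each G[Vᵢ] is a (φ, dᵢ)-expander where dᵢ(v) = d(v) + w(E({v}, V\Vᵢ)) with d(v) = λ̃·1[v ∈ U] for some λ̃ ≥ λ; (b) the min-cut (S₁, S₂) makes U (1+1/φ)³-balanced. Construct U' by taking 1 arbitrary vertex from each Uᵢ with 1 ≤ |Uᵢ| ≤ 1/φ² and 1 + 1/φ arbitrary vertices from each Uᵢ with |Uᵢ| > 1/φ². Then S₁ ∩ U' ≠ ∅ and S₂ ∩ U' ≠ ∅. -/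

import Mathlib

open Finset

/-- Total weight of (ordered) edges from `X` to `Y`. -/
noncomputable def edgeW {V : Type*} [Fintype V] [DecidableEq V]
    (w : V → V → ℝ) (X Y : Finset V) : ℝ :=
  ∑ u ∈ X, ∑ v ∈ Y, w u v

/-- Weight of the cut `∂S`. -/
noncomputable def cutW {V : Type*} [Fintype V] [DecidableEq V]
    (w : V → V → ℝ) (S : Finset V) : ℝ :=
  edgeW w S Sᶜ

lemma edgeW_nonneg {V : Type*} [Fintype V] [DecidableEq V]
    (w : V → V → ℝ) (hw : ∀ u v, 0 ≤ w u v) (X Y : Finset V) :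
    0 ≤ edgeW w X Y :=
  Finset.sum_nonneg fun _ _ => Finset.sum_nonneg fun _ _ => hw _ _

lemma edgeW_mono {V : Type*} [Fintype V] [DecidableEq V]
    (w : V → V → ℝ) (hw : ∀ u v, 0 ≤ w u v) {X X' Y Y' : Finset V}
    (hX : X ⊆ X') (hY : Y ⊆ Y') : edgeW w X Y ≤ edgeW w X' Y' := by
  unfold edgeW
  refine le_trans (Finset.sum_le_sum fun u _ =>
    Finset.sum_le_sum_of_subset_of_nonneg hY (fun v _ _ => hw u v)) ?_
  exact Finset.sum_le_sum_of_subset_of_nonneg hX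
    (fun u _ _ => Finset.sum_nonneg fun v _ => hw u v)

lemma aux_hits {V : Type*} [Fintype V] [DecidableEq V]
    (w : V → V → ℝ) (hw : ∀ u v, 0 ≤ w u v)
    (φ : ℝ) (hφ : 0 < φ) (hφ1 : φ ≤ 1)
    (U : Finset V) (lam lamt : ℝ) (hlam : 0 < lam) (hlamt : lam ≤ lamt)
    (ℓ : ℕ) (c : V → Fin ℓ)
    (d : V → ℝ) (hd : ∀ v, d v = if v ∈ U then lamt else 0)
    (hexp : ∀ i : Fin ℓ, ∀ S ⊆ Finset.univ.filter (fun v => c v = i),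
      φ * min (∑ v ∈ S, (d v + edgeW w {v} (Finset.univ.filter (fun v => c v = i))ᶜ))
              (∑ v ∈ Finset.univ.filter (fun v => c v = i) \ S,
                (d v + edgeW w {v} (Finset.univ.filter (fun v => c v = i))ᶜ))
        ≤ edgeW w S (Finset.univ.filter (fun v => c v = i) \ S))
    (U' : Finset V) (hU'U : U' ⊆ U)
    (hsmall : ∀ i : Fin ℓ,
      1 ≤ (Finset.univ.filter (fun v => c v = i) ∩ U).card →
      ((Finset.univ.filter (fun v => c v = i) ∩ U).card : ℝ) ≤ 1 / φ ^ 2 →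
      (U' ∩ (Finset.univ.filter (fun v => c v = i) ∩ U)).card = 1)
    (hlarge : ∀ i : Fin ℓ,
      1 / φ ^ 2 < ((Finset.univ.filter (fun v => c v = i) ∩ U).card : ℝ) →
      1 + 1 / φ ≤ ((U' ∩ (Finset.univ.filter (fun v => c v = i) ∩ U)).card : ℝ))
    (T : Finset V) (hTcut : cutW w T ≤ lam)
    (hbal : (1 + 1 / φ) ^ 3 ≤ ((T ∩ U).card : ℝ)) :
    (T ∩ U').Nonempty := by
  classical
  by_contra hcon
  rw [Finset.not_nonempty_iff_eq_empty, Finset.eq_empty_iff_forall_notMem] at hcon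
  have hnT : ∀ v ∈ U', v ∉ T := by
    intro v hv hvT
    exact hcon v (Finset.mem_inter.mpr ⟨hvT, hv⟩)
  have hlamt0 : 0 < lamt := lt_of_lt_of_le hlam hlamt
  have hd0 : ∀ v, 0 ≤ d v := by
    intro v; rw [hd]; split <;> [exact le_of_lt hlamt0; exact le_refl 0]
  set Vi : Fin ℓ → Finset V := fun i => Finset.univ.filter (fun v => c v = i) with hVi
  set A : Fin ℓ → Finset V := fun i => T ∩ Vi i with hA
  set B : Fin ℓ → Finset V := fun i => Vi i \ A i with hB
  have hmemVi : ∀ i v, v ∈ Vi i ↔ c v = i := by intro i v; simp [hVi]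
  have hmemA : ∀ i v, v ∈ A i ↔ v ∈ T ∧ c v = i := by intro i v; simp [hA, hVi]
  have hmemB : ∀ i v, v ∈ B i ↔ v ∉ T ∧ c v = i := by
    intro i v; simp [hB, hA, hVi]; tauto
  -- the total degree weight
  set f : Fin ℓ → V → ℝ := fun i v => d v + edgeW w {v} (Vi i)ᶜ with hf
  have hf0 : ∀ i v, 0 ≤ f i v := fun i v =>
    add_nonneg (hd0 v) (edgeW_nonneg w hw _ _)
  have hfU : ∀ i v, v ∈ U → lamt ≤ f i v := by
    intro i v hv
    have : d v = lamt := by rw [hd]; simp [hv]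
    have h2 := edgeW_nonneg w hw ({v} : Finset V) (Vi i)ᶜ
    simp only [hf]; linarith
  -- volume lower bound
  have hvol : ∀ i (S : Finset V), lamt * ((S ∩ U).card : ℝ) ≤ ∑ v ∈ S, f i v := by
    intro i S
    have h1 : ∑ v ∈ S ∩ U, lamt ≤ ∑ v ∈ S ∩ U, f i v :=
      Finset.sum_le_sum fun v hv => hfU i v (Finset.mem_inter.mp hv).2
    have h2 : ∑ v ∈ S ∩ U, f i v ≤ ∑ v ∈ S, f i v :=
      Finset.sum_le_sum_of_subset_of_nonneg Finset.inter_subset_left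
        (fun v _ _ => hf0 i v)
    rw [Finset.sum_const, nsmul_eq_mul] at h1
    calc lamt * ((S ∩ U).card : ℝ) = ((S ∩ U).card : ℝ) * lamt := by ring
    _ ≤ ∑ v ∈ S ∩ U, f i v := h1
    _ ≤ ∑ v ∈ S, f i v := h2
  -- expander bound per cluster
  have hexpi : ∀ i, φ * min (lamt * ((A i ∩ U).card : ℝ)) (lamt * ((B i ∩ U).card : ℝ))
      ≤ edgeW w (A i) (B i) := by
    intro i
    have h := hexp i (A i) Finset.inter_subset_right
    have hmin : min (lamt * ((A i ∩ U).card : ℝ)) (lamt * ((B i ∩ U).card : ℝ))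
        ≤ min (∑ v ∈ A i, f i v) (∑ v ∈ Vi i \ A i, f i v) := by
      apply le_min
      · exact le_trans (min_le_left _ _) (hvol i (A i))
      · exact le_trans (min_le_right _ _) (hvol i (B i))
    calc φ * min (lamt * ((A i ∩ U).card : ℝ)) (lamt * ((B i ∩ U).card : ℝ))
        ≤ φ * min (∑ v ∈ A i, f i v) (∑ v ∈ Vi i \ A i, f i v) := by
          exact mul_le_mul_of_nonneg_left hmin (le_of_lt hφ)
    _ ≤ edgeW w (A i) (Vi i \ A i) := h
    _ = edgeW w (A i) (B i) := rfl
  -- each cluster cut is at most lam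
  have hEle : ∀ i, edgeW w (A i) (B i) ≤ lam := by
    intro i
    refine le_trans (edgeW_mono w hw Finset.inter_subset_left ?_) hTcut
    intro v hv
    rw [Finset.mem_compl]
    exact ((hmemB i v).mp hv).1
  -- sum of cluster cuts is at most lam
  have hEsum : ∑ i : Fin ℓ, edgeW w (A i) (B i) ≤ lam := by
    have h1 : ∀ i, edgeW w (A i) (B i) ≤ edgeW w (A i) Tᶜ := by
      intro i
      refine edgeW_mono w hw (le_refl _) ?_
      intro v hv; rw [Finset.mem_compl]; exact ((hmemB i v).mp hv).1
    have h2 : ∑ i : Fin ℓ, edgeW w (A i) Tᶜ = cutW w T := by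
      unfold cutW edgeW
      have hAi : ∀ i, A i = T.filter (fun v => c v = i) := by
        intro i; ext v; simp [hmemA i v, Finset.mem_filter]
      calc ∑ i : Fin ℓ, ∑ u ∈ A i, ∑ v ∈ Tᶜ, w u v
          = ∑ i : Fin ℓ, ∑ u ∈ T.filter (fun v => c v = i), ∑ v ∈ Tᶜ, w u v := by
            refine Finset.sum_congr rfl fun i _ => ?_; rw [hAi]
      _ = ∑ u ∈ T, ∑ v ∈ Tᶜ, w u v := Finset.sum_fiberwise T c _
    calc ∑ i : Fin ℓ, edgeW w (A i) (B i) ≤ ∑ i : Fin ℓ, edgeW w (A i) Tᶜ :=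
          Finset.sum_le_sum fun i _ => h1 i
    _ = cutW w T := h2
    _ ≤ lam := hTcut
  -- gray clusters
  set Gr : Finset (Fin ℓ) :=
    Finset.univ.filter (fun i => (A i ∩ U).Nonempty ∧ (B i ∩ U).Nonempty) with hGr
  have hgraylb : ∀ i ∈ Gr, φ * lamt ≤ edgeW w (A i) (B i) := by
    intro i hi
    rw [hGr, Finset.mem_filter] at hi
    obtain ⟨-, hAne, hBne⟩ := hi
    have hA1 : (1 : ℝ) ≤ ((A i ∩ U).card : ℝ) := by
      exact_mod_cast Finset.card_pos.mpr hAne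
    have hB1 : (1 : ℝ) ≤ ((B i ∩ U).card : ℝ) := by
      exact_mod_cast Finset.card_pos.mpr hBne
    have := hexpi i
    have hlb : lamt ≤ min (lamt * ((A i ∩ U).card : ℝ)) (lamt * ((B i ∩ U).card : ℝ)) := by
      apply le_min <;> nlinarith
    nlinarith [mul_le_mul_of_nonneg_left hlb (le_of_lt hφ)]
  have hGrcard : ((Gr.card : ℝ)) * (φ * lamt) ≤ lamt := by
    have h1 : (Gr.card : ℝ) * (φ * lamt) ≤ ∑ i ∈ Gr, edgeW w (A i) (B i) := by
      have := Finset.card_nsmul_le_sum Gr (fun i => edgeW w (A i) (B i)) (φ * lamt) hgraylb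
      rwa [nsmul_eq_mul] at this
    have h2 : ∑ i ∈ Gr, edgeW w (A i) (B i) ≤ ∑ i : Fin ℓ, edgeW w (A i) (B i) :=
      Finset.sum_le_sum_of_subset_of_nonneg (Finset.subset_univ Gr)
        (fun i _ _ => edgeW_nonneg w hw _ _)
    linarith
  have hGrφ : (Gr.card : ℝ) ≤ 1 / φ := by
    rw [le_div_iff₀ hφ]
    have := hGrcard
    nlinarith
  -- no black clusters: if A i ∩ U nonempty then B i ∩ U nonempty
  have hblack : ∀ i, (A i ∩ U).Nonempty → (B i ∩ U).Nonempty := by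
    intro i hAne
    by_contra hBe
    rw [Finset.not_nonempty_iff_eq_empty] at hBe
    have hUi : Vi i ∩ U = A i ∩ U := by
      ext v
      simp only [Finset.mem_inter, hmemVi, hmemA]
      constructor
      · rintro ⟨hcv, hvU⟩
        by_cases hvT : v ∈ T
        · exact ⟨⟨hvT, hcv⟩, hvU⟩
        · exfalso
          have : v ∈ B i ∩ U := Finset.mem_inter.mpr ⟨(hmemB i v).mpr ⟨hvT, hcv⟩, hvU⟩
          rw [hBe] at this; exact absurd this (Finset.notMem_empty v)
      · rintro ⟨⟨_, hcv⟩, hvU⟩; exact ⟨hcv, hvU⟩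
    have hUine : 1 ≤ (Vi i ∩ U).card := by
      rw [hUi]; exact Finset.card_pos.mpr hAne
    have hhit : 1 ≤ (U' ∩ (Vi i ∩ U)).card := by
      by_cases hsz : ((Vi i ∩ U).card : ℝ) ≤ 1 / φ ^ 2
      · rw [hsmall i hUine hsz]
      · have := hlarge i (lt_of_not_ge hsz)
        have h1φ : 0 < 1 / φ := by positivity
        have : (1 : ℝ) ≤ ((U' ∩ (Vi i ∩ U)).card : ℝ) := by linarith
        exact_mod_cast this
    obtain ⟨v, hv⟩ := Finset.card_pos.mp hhit
    rw [Finset.mem_inter] at hv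
    have hvT : v ∈ T := by
      have : v ∈ A i ∩ U := by rw [← hUi]; exact hv.2
      exact ((hmemA i v).mp (Finset.mem_inter.mp this).1).1
    exact hnT v hv.1 hvT
  -- per-cluster card bound
  have hAU : ∀ i, ((A i ∩ U).card : ℝ) ≤ 1 / φ ^ 2 := by
    intro i
    by_cases hAne : (A i ∩ U).Nonempty
    · have hBne := hblack i hAne
      have hA1 : (1 : ℝ) ≤ ((A i ∩ U).card : ℝ) := by
        exact_mod_cast Finset.card_pos.mpr hAne
      have hB1 : (1 : ℝ) ≤ ((B i ∩ U).card : ℝ) := by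
        exact_mod_cast Finset.card_pos.mpr hBne
      have hminle : min ((A i ∩ U).card : ℝ) ((B i ∩ U).card : ℝ) ≤ 1 / φ := by
        have h1 := hexpi i
        have h2 := hEle i
        rw [le_div_iff₀ hφ]
        set m := min ((A i ∩ U).card : ℝ) ((B i ∩ U).card : ℝ) with hm
        have : lamt * m = min (lamt * ((A i ∩ U).card : ℝ)) (lamt * ((B i ∩ U).card : ℝ)) := by
          rw [hm, mul_min_of_nonneg _ _ (le_of_lt hlamt0)]
        nlinarith [h1, h2, this]
      have hφ2 : (1 : ℝ) / φ ≤ 1 / φ ^ 2 := by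
        rw [div_le_div_iff₀ hφ (by positivity)]
        nlinarith
      rcases min_cases ((A i ∩ U).card : ℝ) ((B i ∩ U).card : ℝ) with ⟨heq, _⟩ | ⟨heq, hlt⟩
      · rw [heq] at hminle; linarith
      · -- B side is the min
        rw [heq] at hminle
        by_cases hsz : ((Vi i ∩ U).card : ℝ) ≤ 1 / φ ^ 2
        · refine le_trans ?_ hsz
          have : (A i ∩ U).card ≤ (Vi i ∩ U).card :=
            Finset.card_le_card (Finset.inter_subset_inter Finset.inter_subset_right (le_refl _))
          exact_mod_cast this
        · exfalso
          have hlg := hlarge i (lt_of_not_ge hsz)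
          have hsub : U' ∩ (Vi i ∩ U) ⊆ B i ∩ U := by
            intro v hv
            rw [Finset.mem_inter, Finset.mem_inter] at hv
            rw [Finset.mem_inter]
            exact ⟨(hmemB i v).mpr ⟨hnT v hv.1, (hmemVi i v).mp hv.2.1⟩, hv.2.2⟩
          have : ((U' ∩ (Vi i ∩ U)).card : ℝ) ≤ ((B i ∩ U).card : ℝ) := by
            exact_mod_cast Finset.card_le_card hsub
          have h1φ : (0:ℝ) < 1 / φ := by positivity
          linarith
    · rw [Finset.not_nonempty_iff_eq_empty] at hAne
      rw [hAne]
      simp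
      positivity
  -- sum up
  have hsumcard : ((T ∩ U).card : ℝ) = ∑ i : Fin ℓ, ((A i ∩ U).card : ℝ) := by
    have h := Finset.card_eq_sum_card_fiberwise
      (f := c) (s := T ∩ U) (t := Finset.univ) (fun x _ => Finset.mem_univ (c x))
    have hAi : ∀ i, A i ∩ U = (T ∩ U).filter (fun v => c v = i) := by
      intro i; ext v
      simp only [Finset.mem_inter, Finset.mem_filter, hmemA]
      tauto
    rw [h]
    push_cast
    refine Finset.sum_congr rfl fun i _ => ?_
    rw [hAi]
  have hzero : ∀ i ∈ Finset.univ, i ∉ Gr → ((A i ∩ U).card : ℝ) = 0 := by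
    intro i _ hi
    rw [hGr, Finset.mem_filter] at hi
    push_neg at hi
    by_contra hne
    have hAne : (A i ∩ U).Nonempty := by
      rw [Finset.nonempty_iff_ne_empty]
      intro he; rw [he] at hne; simp at hne
    exact absurd (hblack i hAne) (Finset.not_nonempty_iff_eq_empty.mpr (hi (Finset.mem_univ i) hAne))
  have hsumGr : ∑ i : Fin ℓ, ((A i ∩ U).card : ℝ) = ∑ i ∈ Gr, ((A i ∩ U).card : ℝ) :=
    (Finset.sum_subset (Finset.subset_univ Gr) hzero).symm
  have hsumle : ∑ i ∈ Gr, ((A i ∩ U).card : ℝ) ≤ (Gr.card : ℝ) * (1 / φ ^ 2) := by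
    have := Finset.sum_le_card_nsmul Gr (fun i => ((A i ∩ U).card : ℝ)) (1 / φ ^ 2)
      (fun i _ => hAU i)
    rwa [nsmul_eq_mul] at this
  have hfinal : ((T ∩ U).card : ℝ) ≤ (1 / φ) * (1 / φ ^ 2) := by
    rw [hsumcard, hsumGr]
    refine le_trans hsumle ?_
    have : (0:ℝ) ≤ 1 / φ ^ 2 := by positivity
    nlinarith [hGrφ]
  have hcube : (1 / φ) * (1 / φ ^ 2) < (1 + 1 / φ) ^ 3 := by
    have h1φ : (0:ℝ) < 1 / φ := by positivity
    have : (1/φ) * (1/φ^2) = (1/φ)^3 := by ring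
    rw [this]
    nlinarith [h1φ]
  linarith

/-- If `U` is `(1+1/φ)³`-balanced with witness the min-cut `(S₁, S₁ᶜ)`, and `U'`
picks one vertex from each small cluster (`1 ≤ |Uᵢ| ≤ 1/φ²`) and `1 + 1/φ` vertices from each
large cluster (`|Uᵢ| > 1/φ²`) of a `(φ, dᵢ)`-expander decomposition, then `U'` hits both sides
of the min-cut. -/
theorem sparsified_set_hits_both_sides (V : Type*) [Fintype V] [DecidableEq V]
    (w : V → V → ℝ) (hw : ∀ u v, 0 ≤ w u v) (hsymm : ∀ u v, w u v = w v u)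
    (φ : ℝ) (hφ : 0 < φ) (hφ1 : φ ≤ 1)
    (U : Finset V) (lam lamt : ℝ) (hlam : 0 < lam) (hlamt : lam ≤ lamt)
    (hmin : ∀ S : Finset V, S.Nonempty → S ≠ Finset.univ → lam ≤ cutW w S)
    (ℓ : ℕ) (c : V → Fin ℓ)
    (d : V → ℝ) (hd : ∀ v, d v = if v ∈ U then lamt else 0)
    -- (a) each cluster induces a (φ, dᵢ)-expander, dᵢ(v) = d(v) + w(E({v}, V \ Vᵢ))
    (hexp : ∀ i : Fin ℓ, ∀ S ⊆ Finset.univ.filter (fun v => c v = i),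
      φ * min (∑ v ∈ S, (d v + edgeW w {v} (Finset.univ.filter (fun v => c v = i))ᶜ))
              (∑ v ∈ Finset.univ.filter (fun v => c v = i) \ S,
                (d v + edgeW w {v} (Finset.univ.filter (fun v => c v = i))ᶜ))
        ≤ edgeW w S (Finset.univ.filter (fun v => c v = i) \ S))
    -- (b) the min-cut (S₁, S₁ᶜ) makes U (1+1/φ)³-balanced
    (S₁ : Finset V) (hS₁ : S₁.Nonempty) (hS₁univ : S₁ ≠ Finset.univ)
    (hS₁cut : cutW w S₁ = lam)
    (hbal₁ : (1 + 1 / φ) ^ 3 ≤ ((S₁ ∩ U).card : ℝ))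
    (hbal₂ : (1 + 1 / φ) ^ 3 ≤ ((S₁ᶜ ∩ U).card : ℝ))
    -- construction of U'
    (U' : Finset V) (hU'U : U' ⊆ U)
    (hsmall : ∀ i : Fin ℓ,
      1 ≤ (Finset.univ.filter (fun v => c v = i) ∩ U).card →
      ((Finset.univ.filter (fun v => c v = i) ∩ U).card : ℝ) ≤ 1 / φ ^ 2 →
      (U' ∩ (Finset.univ.filter (fun v => c v = i) ∩ U)).card = 1)
    (hlarge : ∀ i : Fin ℓ,
      1 / φ ^ 2 < ((Finset.univ.filter (fun v => c v = i) ∩ U).card : ℝ) →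
      1 + 1 / φ ≤ ((U' ∩ (Finset.univ.filter (fun v => c v = i) ∩ U)).card : ℝ)) :
    (S₁ ∩ U').Nonempty ∧ (S₁ᶜ ∩ U').Nonempty := by

  have hcutSc : cutW w S₁ᶜ ≤ lam := by
    have : cutW w S₁ᶜ = cutW w S₁ := by
      unfold cutW edgeW
      rw [compl_compl, Finset.sum_comm]
      exact Finset.sum_congr rfl fun u _ => Finset.sum_congr rfl fun v _ => hsymm v u
    rw [this, hS₁cut]
  refine ⟨?_, ?_⟩
  · exact aux_hits w hw φ hφ hφ1 U lam lamt hlam hlamt ℓ c d hd hexp U' hU'U hsmall hlarge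
      S₁ (le_of_eq hS₁cut) hbal₁
  · exact aux_hits w hw φ hφ hφ1 U lam lamt hlam hlamt ℓ c d hd hexp U' hU'U hsmall hlarge
      S₁ᶜ hcutSc hbal₂
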